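/- Under the identification ⊕_{d̲} V^{S_{d̲}} ≅ (V ⊗ E^{⊗d})^{S_d} given by v ↦ (1/d!)∑_{x∈S_d} x(v)⊗x(θ_{d̲}), the Chevalley generator E_a of gl_n acts on the summand V^{S_{d̲}} (when d_{a+1} ≥ 1) as d_{a+1}·Ψ, where Ψ: V^{S_{d̲}} → V^{S_{ẽ_a d̲}} is the symmetrization operator Ψ(v) = (1/|S_{ẽ_a d̲}|) ∑_{w ∈ S_{ẽ_a d̲}} w(v). -/

import Mathlib

open Finset

noncomputable section
open scoped Classical

/-- Words of length `d` in the alphabet `{1, …, n}`. -/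
abbrev Word (d n : ℕ) := Fin d → Fin n

/-- Extend a tuple `c : Fin n → ℕ` by zero to a function `ℕ → ℕ`. -/
def extf (n : ℕ) (c : Fin n → ℕ) : ℕ → ℕ := fun j => if h : j < n then c ⟨j, h⟩ else 0

/-- Partial sums of `f : ℕ → ℕ`. -/
def psum (f : ℕ → ℕ) (i : ℕ) : ℕ := ∑ j ∈ Finset.range i, f j

/-- The index of the block (of the composition `f`) containing position `m`. -/
def bIdx (f : ℕ → ℕ) (m : ℕ) : ℕ := sInf {i | m < psum f (i + 1)}

theorem psum_extf (n : ℕ) (c : Fin n → ℕ) : psum (extf n c) n = ∑ i, c i := by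
  unfold psum
  rw [← Fin.sum_univ_eq_sum_range]
  refine Finset.sum_congr rfl fun i _ => ?_
  simp [extf, i.isLt]

theorem bIdx_lt (n d : ℕ) (c : Fin n → ℕ) (hc : ∑ i, c i = d) (m : Fin d) :
    bIdx (extf n c) m < n := by
  rcases n with _ | n
  · exfalso
    have h0 : d = 0 := by simpa using hc.symm
    have := m.2
    omega
  · have hmem : (m : ℕ) < psum (extf (n + 1) c) (n + 1) := by
      rw [psum_extf, hc]; exact m.2
    have := Nat.sInf_le (show n ∈ {i | (m : ℕ) < psum (extf (n + 1) c) (i + 1)} from hmem)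
    unfold bIdx
    omega

/-- The canonical (monotone) word `θ_{d̲}` of a composition `d̲ = c` of `d`. -/
def wordOf (n d : ℕ) (c : Fin n → ℕ) (hc : ∑ i, c i = d) : Word d n :=
  fun m => ⟨bIdx (extf n c) m, bIdx_lt n d c hc m⟩

/-- The Young subgroup `S_{d̲} ⊆ S_d` of a composition `d̲ = c`. -/
def youngC (n d : ℕ) (c : Fin n → ℕ) : Subgroup (Equiv.Perm (Fin d)) where
  carrier := {σ | ∀ m : Fin d, bIdx (extf n c) (σ m) = bIdx (extf n c) m}
  one_mem' := fun _ => rfl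
  mul_mem' := by
    intro σ τ hσ hτ m
    simpa [Equiv.Perm.mul_apply, hτ m] using hσ (τ m)
  inv_mem' := by
    intro σ hσ m
    have h := hσ (σ⁻¹ m)
    simpa using h.symm

variable (n d : ℕ) (V : Type) [AddCommGroup V] [Module ℂ V]
  (ρ : Representation ℂ (Equiv.Perm (Fin d)) V)

/-- A model for `V ⊗ E^{⊗d}`: functions from words to `V`. -/
abbrev TensV := Word d n → V

/-- The image of `v ∈ V^{S_{d̲}}` under the identification
`⊕_{d̲} V^{S_{d̲}} ≅ (V ⊗ E^{⊗d})^{S_d}`, namely `(1/d!) ∑_{x ∈ S_d} x(v) ⊗ x(θ_{d̲})`. -/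
def phiFun (c : Fin n → ℕ) (hc : ∑ i, c i = d) (v : V) : TensV n d V :=
  fun w => (Nat.factorial d : ℂ)⁻¹ •
    ∑ x : Equiv.Perm (Fin d), if w ∘ x = wordOf n d c hc then ρ x v else 0

/-- The Chevalley generator `E_a` of `gl_n` acting on `V ⊗ E^{⊗d}` (by the Leibniz rule on
the tensor factor `E^{⊗d}`, with `E_a θ_{ja} = θ_{ia}`, `ia = a`, `ja = a + 1`). -/
def chevEV (ia ja : Fin n) : TensV n d V →ₗ[ℂ] TensV n d V where
  toFun x := fun w => ∑ k : Fin d, if w k = ia then x (Function.update w k ja) else 0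
  map_add' x y := by
    funext w
    show (∑ k : Fin d, (_ : V)) = (∑ k : Fin d, (_ : V)) + (∑ k : Fin d, (_ : V))
    rw [← Finset.sum_add_distrib]
    refine Finset.sum_congr rfl fun k _ => ?_
    split <;> simp
  map_smul' c x := by
    funext w
    show (∑ k : Fin d, (_ : V)) = c • (∑ k : Fin d, (_ : V))
    rw [Finset.smul_sum]
    refine Finset.sum_congr rfl fun k _ => ?_
    split <;> simp

/-- The symmetrization operator `Ψ_{d̲', d̲} : V^{S_{d̲}} → V^{S_{d̲'}}`,
`Ψ(v) = (1/|S_{d̲'}|) ∑_{w ∈ S_{d̲'}} w(v)`. -/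
def PsiAvg (c' : Fin n → ℕ) (v : V) : V :=
  (Nat.card (youngC n d c') : ℂ)⁻¹ •
    ∑ σ : Equiv.Perm (Fin d), if σ ∈ youngC n d c' then ρ σ v else 0


section Helpers

lemma psum_mono (f : ℕ → ℕ) : Monotone (psum f) := fun i j h =>
  Finset.sum_le_sum_of_subset (Finset.range_subset_range.2 h)

lemma psum_succ (f : ℕ → ℕ) (i : ℕ) : psum f (i + 1) = psum f i + f i :=
  Finset.sum_range_succ f i

lemma bIdx_eq_of (f : ℕ → ℕ) (m i : ℕ) (h1 : psum f i ≤ m) (h2 : m < psum f (i + 1)) :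
    bIdx f m = i := by
  have hub : bIdx f m ≤ i := Nat.sInf_le h2
  have hnlt : ¬ bIdx f m < i := by
    intro hlt
    have hne : {j | m < psum f (j + 1)}.Nonempty := ⟨i, h2⟩
    have hmem : m < psum f (bIdx f m + 1) := Nat.sInf_mem hne
    have hle : psum f (bIdx f m + 1) ≤ psum f i := psum_mono f hlt
    omega
  omega

lemma bIdx_spec (f : ℕ → ℕ) (m i : ℕ) (h : m < psum f (i + 1)) :
    psum f (bIdx f m) ≤ m ∧ m < psum f (bIdx f m + 1) := by
  have hne : {j | m < psum f (j + 1)}.Nonempty := ⟨i, h⟩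
  have hmem : m < psum f (bIdx f m + 1) := Nat.sInf_mem hne
  refine ⟨?_, hmem⟩
  rcases Nat.eq_zero_or_pos (bIdx f m) with h0 | hpos
  · simp [h0, psum]
  · have hnm : bIdx f m - 1 ∉ {j | m < psum f (j + 1)} :=
      Nat.notMem_of_lt_sInf (show bIdx f m - 1 < bIdx f m by omega)
    have : ¬ m < psum f (bIdx f m - 1 + 1) := hnm
    rw [Nat.sub_add_cancel hpos] at this
    omega

lemma ite_smul_sum {α V : Type*} [Fintype α] [AddCommGroup V] [Module ℂ V]
    (P : Prop) [Decidable P] (r : ℂ) (Q : α → Prop) [∀ x, Decidable (Q x)] (f : α → V) :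
    (if P then r • ∑ x : α, (if Q x then f x else 0) else 0)
      = r • ∑ x : α, (if P ∧ Q x then f x else 0) := by
  by_cases hP : P
  · simp only [if_pos hP]
    congr 1
    exact Finset.sum_congr rfl fun x _ => by
      by_cases hQ : Q x <;> simp [hQ, hP]
  · simp only [if_neg hP]
    have : ∀ x : α, (if P ∧ Q x then f x else 0) = 0 := fun x => by simp [hP]
    simp [this]

lemma sum_ite_and {α V : Type*} [Fintype α] [AddCommGroup V] [Module ℂ V]
    (P : Prop) [Decidable P] (Q : α → Prop) [∀ x, Decidable (Q x)] (f : α → V) :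
    (∑ x : α, if P ∧ Q x then f x else 0)
      = if P then ∑ x : α, (if Q x then f x else 0) else 0 := by
  by_cases hP : P
  · simp only [if_pos hP]
    exact Finset.sum_congr rfl fun x _ => by by_cases hQ : Q x <;> simp [hQ, hP]
  · have : ∀ x : α, (if P ∧ Q x then f x else 0) = 0 := fun x => by simp [hP]
    simp [this, hP]

lemma sum_ite_and' {α V : Type*} [Fintype α] [AddCommGroup V] [Module ℂ V]
    (P : Prop) [Decidable P] (Q : α → Prop) [∀ x, Decidable (Q x)] (f : α → V) :
    (∑ x : α, if Q x ∧ P then f x else 0)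
      = if P then ∑ x : α, (if Q x then f x else 0) else 0 := by
  by_cases hP : P
  · simp only [if_pos hP]
    exact Finset.sum_congr rfl fun x _ => by by_cases hQ : Q x <;> simp [hQ, hP]
  · have : ∀ x : α, (if Q x ∧ P then f x else 0) = 0 := fun x => by simp [hP]
    simp [this, hP]

lemma comp_perm_eq_iff {d n : ℕ} (w g : Word d n) (x τ : Equiv.Perm (Fin d)) :
    w ∘ ⇑(x * τ) = g ∘ ⇑τ ↔ w ∘ ⇑x = g := by
  constructor
  · intro h
    funext m
    have h2 := congr_fun h (τ⁻¹ m)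
    simpa using h2
  · intro h
    funext m
    have h2 := congr_fun h (τ m)
    simpa using h2

lemma extf_update (n : ℕ) (a : ℕ) (ha : a + 1 < n) (c c' : Fin n → ℕ)
    (hc'def : c' = Function.update
        (Function.update c ⟨a, by omega⟩ (c ⟨a, by omega⟩ + 1)) ⟨a + 1, ha⟩
        (c ⟨a + 1, ha⟩ - 1)) :
    ∀ j, extf n c' j =
      if j = a then extf n c j + 1 else if j = a + 1 then extf n c j - 1 else extf n c j := by
  intro j
  subst hc'def
  unfold extf
  by_cases hj : j < n
  · simp only [dif_pos hj]
    by_cases hja : j = a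
    · subst hja
      rw [if_pos rfl,
        Function.update_of_ne (by simp [Fin.ext_iff]) _ _,
        Function.update_self]
    · rw [if_neg hja]
      by_cases hja1 : j = a + 1
      · subst hja1
        rw [if_pos rfl, Function.update_self]
      · rw [if_neg hja1,
          Function.update_of_ne (by simp [Fin.ext_iff]; omega) _ _,
          Function.update_of_ne (by simp [Fin.ext_iff]; omega) _ _]
  · have h1 : ¬ j = a := by omega
    have h2 : ¬ j = a + 1 := by omega
    rw [dif_neg hj, if_neg h1, if_neg h2, dif_neg hj]

lemma psum_update (n : ℕ) (a : ℕ) (ha : a + 1 < n) (c c' : Fin n → ℕ)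
    (h1 : 1 ≤ c ⟨a + 1, ha⟩)
    (hc'def : c' = Function.update
        (Function.update c ⟨a, by omega⟩ (c ⟨a, by omega⟩ + 1)) ⟨a + 1, ha⟩
        (c ⟨a + 1, ha⟩ - 1)) :
    ∀ i, psum (extf n c') i =
      if i = a + 1 then psum (extf n c) i + 1 else psum (extf n c) i := by
  have hext := extf_update n a ha c c' hc'def
  have hext1 : 1 ≤ extf n c (a + 1) := by
    unfold extf; rw [dif_pos ha]; exact h1
  intro i
  induction i with
  | zero => simp [psum]
  | succ i ih =>
    simp only [psum_succ, hext, ih]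
    by_cases hia1 : i = a + 1
    · subst hia1
      split_ifs <;> omega
    · by_cases hia : i = a
      · subst hia
        split_ifs <;> omega
      · split_ifs <;> omega

lemma card_block (n d : ℕ) (c : Fin n → ℕ) (hc : ∑ i, c i = d) (i : ℕ) (hin : i + 1 ≤ n) :
    (Finset.univ.filter fun m : Fin d => bIdx (extf n c) (m : ℕ) = i).card = extf n c i := by
  have hd : psum (extf n c) n = d := by rw [psum_extf, hc]
  have hmono := psum_mono (extf n c)
  have hcard : ∀ m : Fin d, (m : ℕ) < psum (extf n c) (n + 1) := by
    intro m
    have h2 := hmono (show n ≤ n + 1 by omega)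
    have := m.2
    omega
  have hkey : extf n c i = psum (extf n c) (i + 1) - psum (extf n c) i := by
    rw [psum_succ]; omega
  rw [hkey, ← Nat.card_Ico]
  refine Finset.card_nbij (i := fun m => (m : ℕ)) ?_ ?_ ?_
  · intro m hm
    simp only [Finset.coe_filter, Finset.mem_coe, Set.mem_setOf_eq, Finset.mem_filter, Finset.mem_univ, true_and] at hm
    obtain ⟨hlo, hhi⟩ := bIdx_spec _ _ _ (hcard m)
    rw [hm] at hlo hhi
    simp only [Finset.coe_Ico, Set.mem_Ico, Finset.mem_Ico]
    exact ⟨hlo, hhi⟩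
  · intro m _ m' _ h
    exact Fin.ext h
  · intro j hj
    simp only [Finset.coe_Ico, Set.mem_Ico] at hj
    have hjd : (j : ℕ) < d := by
      have h2 := hmono hin
      omega
    refine ⟨⟨j, hjd⟩, ?_, rfl⟩
    simp only [Finset.coe_filter, Set.mem_setOf_eq, Finset.mem_univ, true_and]
    exact bIdx_eq_of _ _ _ hj.1 hj.2

end Helpers

/-- Under the identification `⊕_{d̲} V^{S_{d̲}} ≅ (V ⊗ E^{⊗d})^{S_d}`, the
Chevalley generator `E_a` acts on the summand `V^{S_{d̲}}` (when `d_{a+1} ≥ 1`) as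
`d_{a+1} · Ψ`, where `Ψ : V^{S_{d̲}} → V^{S_{ẽ_a d̲}}` is the symmetrization operator. -/
theorem chevalley_E_is_symmetrization
    (a : ℕ) (ha : a + 1 < n)
    (c : Fin n → ℕ) (hc : ∑ i, c i = d) (h1 : 1 ≤ c ⟨a + 1, ha⟩)
    (c' : Fin n → ℕ)
    (hc'def : c' = Function.update
        (Function.update c ⟨a, by omega⟩ (c ⟨a, by omega⟩ + 1)) ⟨a + 1, ha⟩
        (c ⟨a + 1, ha⟩ - 1))
    (hc' : ∑ i, c' i = d)
    (v : V) (hv : ∀ σ ∈ youngC n d c, ρ σ v = v) :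
    chevEV n d V ⟨a, by omega⟩ ⟨a + 1, ha⟩ (phiFun n d V ρ c hc v) =
      phiFun n d V ρ c' hc'
        (((c ⟨a + 1, ha⟩ : ℕ) : ℂ) • PsiAvg n d V ρ c' v) := by
  have hP' := psum_update n a ha c c' h1 hc'def
  have hd : psum (extf n c) n = d := by rw [psum_extf, hc]
  have hmono := psum_mono (extf n c)
  have hext1 : 1 ≤ extf n c (a + 1) := by unfold extf; rw [dif_pos ha]; exact h1
  have hPa2 : psum (extf n c) (a + 2) = psum (extf n c) (a + 1) + extf n c (a + 1) :=
    psum_succ _ _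
  have hp0lt : psum (extf n c) (a + 1) < d := by
    have := hmono (show a + 2 ≤ n by omega)
    omega
  set p₀ : Fin d := ⟨psum (extf n c) (a + 1), hp0lt⟩ with hp₀def
  have hp₀val : (p₀ : ℕ) = psum (extf n c) (a + 1) := rfl
  have hbp : bIdx (extf n c) (p₀ : ℕ) = a + 1 :=
    bIdx_eq_of _ _ _ hp₀val.ge (by rw [hp₀val, psum_succ (extf n c) (a + 1)]; omega)
  have hbIdx' : ∀ m : Fin d, bIdx (extf n c') (m : ℕ)
      = if (m : ℕ) = (p₀ : ℕ) then a else bIdx (extf n c) (m : ℕ) := by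
    intro m
    by_cases hm0 : (m : ℕ) = (p₀ : ℕ)
    · rw [if_pos hm0]
      have hm0' : (m : ℕ) = psum (extf n c) (a + 1) := hm0
      refine bIdx_eq_of _ _ _ ?_ ?_
      · rw [hP', if_neg (show ¬ a = a + 1 by omega), hm0']
        exact hmono (Nat.le_succ a)
      · rw [hP', if_pos rfl]
        omega
    · rw [if_neg hm0]
      have hm0' : (m : ℕ) ≠ psum (extf n c) (a + 1) := hm0
      have hmlt : (m : ℕ) < psum (extf n c) (n + 1) := by
        have := hmono (show n ≤ n + 1 by omega)
        have := m.2
        omega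
      obtain ⟨hlo, hhi⟩ := bIdx_spec (extf n c) (m : ℕ) n hmlt
      rcases (show bIdx (extf n c) (m : ℕ) ≤ a ∨ bIdx (extf n c) (m : ℕ) = a + 1
          ∨ a + 2 ≤ bIdx (extf n c) (m : ℕ) by omega) with hcase | hcase | hcase
      · refine bIdx_eq_of _ _ _ ?_ ?_
        · rw [hP', if_neg (by omega)]
          exact hlo
        · rw [hP']
          split_ifs with h
          · omega
          · exact hhi
      · rw [hcase] at hlo hhi ⊢
        refine bIdx_eq_of _ _ _ ?_ ?_
        · rw [hP', if_pos rfl]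
          omega
        · rw [hP', if_neg (by omega)]
          exact hhi
      · refine bIdx_eq_of _ _ _ ?_ ?_
        · rw [hP', if_neg (by omega)]
          exact hlo
        · rw [hP', if_neg (by omega)]
          exact hhi
  have hword' : wordOf n d c' hc' = Function.update (wordOf n d c hc) p₀ ⟨a, by omega⟩ := by
    funext m
    by_cases hm : m = p₀
    · rw [hm, Function.update_self]
      refine Fin.ext ?_
      have h5 := hbIdx' p₀
      rw [if_pos rfl] at h5
      exact h5
    · rw [Function.update_of_ne hm]
      refine Fin.ext ?_
      have h5 := hbIdx' m
      rw [if_neg (fun h => hm (Fin.ext h))] at h5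
      exact h5
  have hθp₀ : wordOf n d c hc p₀ = ⟨a + 1, ha⟩ := Fin.ext hbp
  have hθ'σ : ∀ σ ∈ youngC n d c', wordOf n d c' hc' ∘ ⇑σ = wordOf n d c' hc' := by
    intro σ hσ
    funext m
    exact Fin.ext (hσ m)
  funext w
  set S : V := ∑ x : Equiv.Perm (Fin d),
      if w ∘ ⇑x = wordOf n d c' hc' then ρ x v else 0 with hSdef
  -- inner sum lemma for the LHS
  have hinner : ∀ m₀ : Fin d, wordOf n d c hc m₀ = ⟨a + 1, ha⟩ →
      (∑ x : Equiv.Perm (Fin d),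
        if w ∘ ⇑x = Function.update (wordOf n d c hc) m₀ (⟨a, by omega⟩ : Fin n)
          then ρ x v else 0) = S := by
    intro m₀ hm₀
    set τ := Equiv.swap m₀ p₀ with hτdef
    have hbm₀ : bIdx (extf n c) (m₀ : ℕ) = a + 1 := congrArg Fin.val hm₀
    have hτY : τ ∈ youngC n d c := by
      show ∀ m : Fin d, bIdx (extf n c) ((τ m : Fin d) : ℕ) = bIdx (extf n c) (m : ℕ)
      intro m
      rcases eq_or_ne m m₀ with h | h
      · subst h
        rw [hτdef, Equiv.swap_apply_left, hbp, hbm₀]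
      · rcases eq_or_ne m p₀ with h2 | h2
        · subst h2
          rw [hτdef, Equiv.swap_apply_right, hbm₀, hbp]
        · rw [hτdef, Equiv.swap_apply_of_ne_of_ne h h2]
    have hupd : Function.update (wordOf n d c hc) m₀ (⟨a, by omega⟩ : Fin n)
        = wordOf n d c' hc' ∘ ⇑τ := by
      funext m
      rw [hword']
      rcases eq_or_ne m m₀ with h | h
      · subst h
        rw [Function.update_self, Function.comp_apply, hτdef, Equiv.swap_apply_left,
          Function.update_self]
      · rcases eq_or_ne m p₀ with h2 | h2
        · subst h2
          have hne : m₀ ≠ p₀ := fun hh => h hh.symm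
          rw [Function.update_of_ne h, Function.comp_apply, hτdef, Equiv.swap_apply_right,
            Function.update_of_ne hne, hθp₀, hm₀]
        · rw [Function.update_of_ne h, Function.comp_apply, hτdef,
            Equiv.swap_apply_of_ne_of_ne h h2, Function.update_of_ne h2]
    have base := Equiv.sum_comp (Equiv.mulRight τ)
      (fun y : Equiv.Perm (Fin d) =>
        if w ∘ ⇑y = Function.update (wordOf n d c hc) m₀ (⟨a, by omega⟩ : Fin n)
          then ρ y v else 0)
    simp only [Equiv.coe_mulRight] at base
    rw [hSdef, ← base]
    refine Finset.sum_congr rfl fun x _ => ?_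
    have hiff : (w ∘ ⇑(x * τ) = Function.update (wordOf n d c hc) m₀ (⟨a, by omega⟩ : Fin n))
        ↔ (w ∘ ⇑x = wordOf n d c' hc') := by
      rw [hupd]
      exact comp_perm_eq_iff w (wordOf n d c' hc') x τ
    have hρ : ρ (x * τ) v = ρ x v := by
      rw [map_mul, Module.End.mul_apply, hv τ hτY]
    by_cases hcnd : w ∘ ⇑x = wordOf n d c' hc'
    · rw [if_pos hcnd, ← hρ]
      exact if_pos (hiff.mpr hcnd)
    · rw [if_neg hcnd]
      exact if_neg (fun hh => hcnd (hiff.mp hh))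
  -- condition equivalence for the LHS
  have hcondiff : ∀ (x : Equiv.Perm (Fin d)) (m₀ : Fin d),
      ((w (x m₀) = (⟨a, by omega⟩ : Fin n)) ∧
        Function.update w (x m₀) ⟨a + 1, ha⟩ ∘ ⇑x = wordOf n d c hc)
      ↔ (wordOf n d c hc m₀ = ⟨a + 1, ha⟩ ∧
        w ∘ ⇑x = Function.update (wordOf n d c hc) m₀ (⟨a, by omega⟩ : Fin n)) := by
    intro x m₀
    constructor
    · rintro ⟨h1', h2'⟩
      have hθm₀ : wordOf n d c hc m₀ = ⟨a + 1, ha⟩ := by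
        have h3 := congr_fun h2' m₀
        rw [Function.comp_apply, Function.update_self] at h3
        exact h3.symm
      refine ⟨hθm₀, ?_⟩
      funext m
      rcases eq_or_ne m m₀ with h | h
      · subst h
        rw [Function.comp_apply, Function.update_self]
        exact h1'
      · have hx : x m ≠ x m₀ := fun hh => h (x.injective hh)
        have h3 := congr_fun h2' m
        rw [Function.comp_apply, Function.update_of_ne hx] at h3
        rw [Function.comp_apply, Function.update_of_ne h]
        exact h3
    · rintro ⟨hθm₀, h2'⟩
      have h1' : w (x m₀) = (⟨a, by omega⟩ : Fin n) := by
        have h3 := congr_fun h2' m₀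
        rw [Function.comp_apply, Function.update_self] at h3
        exact h3
      refine ⟨h1', ?_⟩
      funext m
      rcases eq_or_ne m m₀ with h | h
      · subst h
        rw [Function.comp_apply, Function.update_self, hθm₀]
      · have hx : x m ≠ x m₀ := fun hh => h (x.injective hh)
        have h3 := congr_fun h2' m
        rw [Function.comp_apply, Function.update_of_ne h] at h3
        rw [Function.comp_apply, Function.update_of_ne hx]
        exact h3
  -- count of positions in block a+1
  have hcnt : (Finset.univ.filter
      fun m₀ : Fin d => wordOf n d c hc m₀ = (⟨a + 1, ha⟩ : Fin n)).card = c ⟨a + 1, ha⟩ := by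
    have hcb := card_block n d c hc (a + 1) (by omega)
    rw [show extf n c (a + 1) = c ⟨a + 1, ha⟩ from by unfold extf; rw [dif_pos ha]] at hcb
    rw [← hcb]
    congr 1
    apply Finset.filter_congr
    intro m _
    constructor
    · intro h
      exact congrArg Fin.val h
    · intro h
      exact Fin.ext h
  -- LHS computation
  have hLHS : (∑ k : Fin d, if w k = (⟨a, by omega⟩ : Fin n) then
        phiFun n d V ρ c hc v (Function.update w k ⟨a + 1, ha⟩) else 0)
      = ((d.factorial : ℂ))⁻¹ • (((c ⟨a + 1, ha⟩ : ℕ) : ℂ) • S) := by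
    have e1 : ∀ k : Fin d,
        (if w k = (⟨a, by omega⟩ : Fin n) then
          phiFun n d V ρ c hc v (Function.update w k ⟨a + 1, ha⟩) else 0)
        = ((d.factorial : ℂ))⁻¹ • ∑ x : Equiv.Perm (Fin d),
            (if w k = (⟨a, by omega⟩ : Fin n) ∧
              Function.update w k ⟨a + 1, ha⟩ ∘ ⇑x = wordOf n d c hc then ρ x v else 0) := by
      intro k
      exact ite_smul_sum _ _ _ _
    calc (∑ k : Fin d, if w k = (⟨a, by omega⟩ : Fin n) then
          phiFun n d V ρ c hc v (Function.update w k ⟨a + 1, ha⟩) else 0)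
        = ∑ k : Fin d, ((d.factorial : ℂ))⁻¹ • ∑ x : Equiv.Perm (Fin d),
            (if w k = (⟨a, by omega⟩ : Fin n) ∧
              Function.update w k ⟨a + 1, ha⟩ ∘ ⇑x = wordOf n d c hc then ρ x v else 0) :=
          Finset.sum_congr rfl fun k _ => e1 k
      _ = ((d.factorial : ℂ))⁻¹ • ∑ k : Fin d, ∑ x : Equiv.Perm (Fin d),
            (if w k = (⟨a, by omega⟩ : Fin n) ∧
              Function.update w k ⟨a + 1, ha⟩ ∘ ⇑x = wordOf n d c hc then ρ x v else 0) :=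
          (Finset.smul_sum).symm
      _ = ((d.factorial : ℂ))⁻¹ • ∑ x : Equiv.Perm (Fin d), ∑ k : Fin d,
            (if w k = (⟨a, by omega⟩ : Fin n) ∧
              Function.update w k ⟨a + 1, ha⟩ ∘ ⇑x = wordOf n d c hc then ρ x v else 0) := by
          rw [Finset.sum_comm]
      _ = ((d.factorial : ℂ))⁻¹ • ∑ x : Equiv.Perm (Fin d), ∑ m₀ : Fin d,
            (if w (x m₀) = (⟨a, by omega⟩ : Fin n) ∧
              Function.update w (x m₀) ⟨a + 1, ha⟩ ∘ ⇑x = wordOf n d c hc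
              then ρ x v else 0) := by
          refine congrArg _ (Finset.sum_congr rfl fun x _ => ?_)
          exact (Equiv.sum_comp x (fun k => if w k = (⟨a, by omega⟩ : Fin n) ∧
            Function.update w k ⟨a + 1, ha⟩ ∘ ⇑x = wordOf n d c hc then ρ x v else 0)).symm
      _ = ((d.factorial : ℂ))⁻¹ • ∑ x : Equiv.Perm (Fin d), ∑ m₀ : Fin d,
            (if wordOf n d c hc m₀ = (⟨a + 1, ha⟩ : Fin n) ∧
              w ∘ ⇑x = Function.update (wordOf n d c hc) m₀ (⟨a, by omega⟩ : Fin n)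
              then ρ x v else 0) := by
          refine congrArg _ (Finset.sum_congr rfl fun x _ =>
            Finset.sum_congr rfl fun m₀ _ => ?_)
          by_cases hcnd : wordOf n d c hc m₀ = (⟨a + 1, ha⟩ : Fin n) ∧
              w ∘ ⇑x = Function.update (wordOf n d c hc) m₀ (⟨a, by omega⟩ : Fin n)
          · rw [if_pos ((hcondiff x m₀).mpr hcnd), if_pos hcnd]
          · rw [if_neg (fun hh => hcnd ((hcondiff x m₀).mp hh)), if_neg hcnd]
      _ = ((d.factorial : ℂ))⁻¹ • ∑ m₀ : Fin d, ∑ x : Equiv.Perm (Fin d),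
            (if wordOf n d c hc m₀ = (⟨a + 1, ha⟩ : Fin n) ∧
              w ∘ ⇑x = Function.update (wordOf n d c hc) m₀ (⟨a, by omega⟩ : Fin n)
              then ρ x v else 0) := by
          rw [Finset.sum_comm]
      _ = ((d.factorial : ℂ))⁻¹ • ∑ m₀ : Fin d,
            (if wordOf n d c hc m₀ = (⟨a + 1, ha⟩ : Fin n) then S else 0) := by
          refine congrArg _ (Finset.sum_congr rfl fun m₀ _ => ?_)
          rw [sum_ite_and]
          by_cases hcnd : wordOf n d c hc m₀ = (⟨a + 1, ha⟩ : Fin n)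
          · rw [if_pos hcnd, if_pos hcnd, hinner m₀ hcnd]
          · rw [if_neg hcnd, if_neg hcnd]
      _ = ((d.factorial : ℂ))⁻¹ • ((Finset.univ.filter
            fun m₀ : Fin d => wordOf n d c hc m₀ = (⟨a + 1, ha⟩ : Fin n)).card • S) := by
          rw [Finset.sum_ite, Finset.sum_const, Finset.sum_const_zero, add_zero]
      _ = ((d.factorial : ℂ))⁻¹ • (((c ⟨a + 1, ha⟩ : ℕ) : ℂ) • S) := by
          rw [hcnt, Nat.cast_smul_eq_nsmul]
  -- RHS computation
  have hN0 : ((Nat.card (youngC n d c') : ℂ)) ≠ 0 := by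
    have hpos : 0 < Nat.card (youngC n d c') := Nat.card_pos
    exact_mod_cast Nat.pos_iff_ne_zero.mp hpos
  have hcardY : (Finset.univ.filter fun σ : Equiv.Perm (Fin d) =>
      σ ∈ youngC n d c').card = Nat.card (youngC n d c') := by
    rw [Nat.card_eq_fintype_card, Fintype.card_subtype]
  have hinnerR : ∀ σ : Equiv.Perm (Fin d), σ ∈ youngC n d c' →
      (∑ y : Equiv.Perm (Fin d),
        if w ∘ ⇑y = wordOf n d c' hc' then ρ y (ρ σ v) else 0) = S := by
    intro σ hσ
    have base := Equiv.sum_comp (Equiv.mulRight σ⁻¹)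
      (fun y : Equiv.Perm (Fin d) =>
        if w ∘ ⇑y = wordOf n d c' hc' then ρ y (ρ σ v) else 0)
    simp only [Equiv.coe_mulRight] at base
    rw [hSdef, ← base]
    refine Finset.sum_congr rfl fun x _ => ?_
    have hθinv : wordOf n d c' hc' ∘ ⇑(σ⁻¹ : Equiv.Perm (Fin d)) = wordOf n d c' hc' :=
      hθ'σ σ⁻¹ (inv_mem hσ)
    have hiff : (w ∘ ⇑(x * σ⁻¹) = wordOf n d c' hc') ↔ (w ∘ ⇑x = wordOf n d c' hc') := by
      constructor
      · intro h
        have := (comp_perm_eq_iff w (wordOf n d c' hc') x σ⁻¹).mp (by rw [h, hθinv])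
        exact this
      · intro h
        have := (comp_perm_eq_iff w (wordOf n d c' hc') x σ⁻¹).mpr h
        rw [hθinv] at this
        exact this
    have hρ : ρ (x * σ⁻¹) (ρ σ v) = ρ x v := by
      rw [← Module.End.mul_apply, ← map_mul, inv_mul_cancel_right]
    by_cases hcnd : w ∘ ⇑x = wordOf n d c' hc'
    · rw [if_pos hcnd, ← hρ]
      exact if_pos (hiff.mpr hcnd)
    · rw [if_neg hcnd]
      exact if_neg (fun hh => hcnd (hiff.mp hh))
  have hRHS : phiFun n d V ρ c' hc' (((c ⟨a + 1, ha⟩ : ℕ) : ℂ) • PsiAvg n d V ρ c' v) w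
      = ((d.factorial : ℂ))⁻¹ • (((c ⟨a + 1, ha⟩ : ℕ) : ℂ) • S) := by
    have e2 : ∀ y : Equiv.Perm (Fin d),
        ρ y (((c ⟨a + 1, ha⟩ : ℕ) : ℂ) • PsiAvg n d V ρ c' v)
        = (((c ⟨a + 1, ha⟩ : ℕ) : ℂ) * ((Nat.card (youngC n d c') : ℂ))⁻¹) •
            ∑ σ : Equiv.Perm (Fin d),
              (if σ ∈ youngC n d c' then ρ y (ρ σ v) else 0) := by
      intro y
      unfold PsiAvg
      rw [map_smul, map_smul, map_sum, ← smul_smul]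
      refine congrArg _ (congrArg _ (Finset.sum_congr rfl fun σ _ => ?_))
      by_cases hσ : σ ∈ youngC n d c' <;> simp [hσ]
    calc phiFun n d V ρ c' hc' (((c ⟨a + 1, ha⟩ : ℕ) : ℂ) • PsiAvg n d V ρ c' v) w
        = ((d.factorial : ℂ))⁻¹ • ∑ y : Equiv.Perm (Fin d),
            (if w ∘ ⇑y = wordOf n d c' hc'
              then ρ y (((c ⟨a + 1, ha⟩ : ℕ) : ℂ) • PsiAvg n d V ρ c' v) else 0) := rfl
      _ = ((d.factorial : ℂ))⁻¹ • ∑ y : Equiv.Perm (Fin d),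
            ((((c ⟨a + 1, ha⟩ : ℕ) : ℂ) * ((Nat.card (youngC n d c') : ℂ))⁻¹) •
              ∑ σ : Equiv.Perm (Fin d),
                (if w ∘ ⇑y = wordOf n d c' hc' ∧ σ ∈ youngC n d c'
                  then ρ y (ρ σ v) else 0)) := by
          refine congrArg _ (Finset.sum_congr rfl fun y _ => ?_)
          rw [← ite_smul_sum]
          by_cases hcnd : w ∘ ⇑y = wordOf n d c' hc'
          · rw [if_pos hcnd, if_pos hcnd, e2 y]
          · rw [if_neg hcnd, if_neg hcnd]
      _ = ((d.factorial : ℂ))⁻¹ • ((((c ⟨a + 1, ha⟩ : ℕ) : ℂ) *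
            ((Nat.card (youngC n d c') : ℂ))⁻¹) •
            ∑ σ : Equiv.Perm (Fin d), ∑ y : Equiv.Perm (Fin d),
              (if w ∘ ⇑y = wordOf n d c' hc' ∧ σ ∈ youngC n d c'
                then ρ y (ρ σ v) else 0)) := by
          rw [← Finset.smul_sum, Finset.sum_comm]
      _ = ((d.factorial : ℂ))⁻¹ • ((((c ⟨a + 1, ha⟩ : ℕ) : ℂ) *
            ((Nat.card (youngC n d c') : ℂ))⁻¹) •
            ∑ σ : Equiv.Perm (Fin d),
              (if σ ∈ youngC n d c' then S else 0)) := by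
          refine congrArg _ (congrArg _ (Finset.sum_congr rfl fun σ _ => ?_))
          rw [sum_ite_and']
          by_cases hσ : σ ∈ youngC n d c'
          · rw [if_pos hσ, if_pos hσ, hinnerR σ hσ]
          · rw [if_neg hσ, if_neg hσ]
      _ = ((d.factorial : ℂ))⁻¹ • ((((c ⟨a + 1, ha⟩ : ℕ) : ℂ) *
            ((Nat.card (youngC n d c') : ℂ))⁻¹) •
            (((Nat.card (youngC n d c') : ℕ) : ℂ) • S)) := by
          rw [Finset.sum_ite, Finset.sum_const, Finset.sum_const_zero, add_zero,
            hcardY, Nat.cast_smul_eq_nsmul]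
      _ = ((d.factorial : ℂ))⁻¹ • (((c ⟨a + 1, ha⟩ : ℕ) : ℂ) • S) := by
          rw [smul_smul, smul_smul, smul_smul]
          congr 1
          rw [mul_assoc, mul_assoc, inv_mul_cancel₀ hN0, mul_one]
  show chevEV n d V ⟨a, by omega⟩ ⟨a + 1, ha⟩ (phiFun n d V ρ c hc v) w
      = phiFun n d V ρ c' hc' (((c ⟨a + 1, ha⟩ : ℕ) : ℂ) • PsiAvg n d V ρ c' v) w
  rw [hRHS, ← hLHS]
  rfl


end
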